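/- Every even ring is perfect; that is, if k ≥ 4 is an even integer and R is a k-ring, then every induced subgraph H of R satisfies χ(H) = ω(H). -/

import Mathlib

open SimpleGraph Finset
open scoped Classical

/-- The closed neighborhood `N_G[v]` of a vertex `v`. -/
def closedNbhd {V : Type} (G : SimpleGraph V) (v : V) : Set V :=
  insert v (G.neighborSet v)

/-- `X` (indexed cyclically by `ZMod k`) is a ring partition of `G`:
a partition into `k` nonempty sets, each of which can be ordered so that the
closed neighborhoods are nested, with the last one covering `X i` and the first
one being exactly `X (i-1) ∪ X i ∪ X (i+1)`. -/
def IsRingPartition {V : Type} (G : SimpleGraph V) (k : ℕ) (X : ZMod k → Set V) : Prop :=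
  (∀ i, (X i).Nonempty) ∧
  (∀ v : V, ∃! i, v ∈ X i) ∧
  ∀ i, ∃ (m : ℕ) (hm : 0 < m) (u : Fin m → V),
    Function.Injective u ∧
    Set.range u = X i ∧
    (∀ j j' : Fin m, j ≤ j' → closedNbhd G (u j') ⊆ closedNbhd G (u j)) ∧
    X i ⊆ closedNbhd G (u ⟨m - 1, by omega⟩) ∧
    closedNbhd G (u ⟨0, hm⟩) = X (i - 1) ∪ X i ∪ X (i + 1)

/-- `G` is a `k`-ring. -/
def IsRing {V : Type} (G : SimpleGraph V) (k : ℕ) : Prop :=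
  ∃ X : ZMod k → Set V, IsRingPartition G k X

/-- `X` is a hyperhole partition of `G`: a partition into `k` nonempty cliques,
each complete to the two neighboring cliques and anticomplete to all remaining
vertices. -/
def IsHyperholePartition {V : Type} (G : SimpleGraph V) (k : ℕ) (X : ZMod k → Set V) : Prop :=
  (∀ i, (X i).Nonempty) ∧
  (∀ v : V, ∃! i, v ∈ X i) ∧
  (∀ i, G.IsClique (X i)) ∧
  (∀ i, ∀ x ∈ X i, ∀ y ∈ X (i - 1) ∪ X (i + 1), G.Adj x y) ∧
  (∀ i, ∀ x ∈ X i, ∀ y, y ∉ X (i - 1) ∪ X i ∪ X (i + 1) → ¬ G.Adj x y)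

/-- `G` is a `k`-hyperhole. -/
def IsHyperhole {V : Type} (G : SimpleGraph V) (k : ℕ) : Prop :=
  ∃ X : ZMod k → Set V, IsHyperholePartition G k X

/-- `X` is a hyperantihole partition of `G`: a partition into `k` nonempty cliques,
each complete to all vertices outside the two neighboring cliques (and itself),
and anticomplete to the two neighboring cliques. -/
def IsHyperantiholePartition {V : Type} (G : SimpleGraph V) (k : ℕ) (X : ZMod k → Set V) : Prop :=
  (∀ i, (X i).Nonempty) ∧
  (∀ v : V, ∃! i, v ∈ X i) ∧
  (∀ i, G.IsClique (X i)) ∧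
  (∀ i, ∀ x ∈ X i, ∀ y, y ∉ X (i - 1) ∪ X i ∪ X (i + 1) → G.Adj x y) ∧
  (∀ i, ∀ x ∈ X i, ∀ y ∈ X (i - 1) ∪ X (i + 1), ¬ G.Adj x y)

/-- `G` is a `k`-hyperantihole. -/
def IsHyperantihole {V : Type} (G : SimpleGraph V) (k : ℕ) : Prop :=
  ∃ X : ZMod k → Set V, IsHyperantiholePartition G k X

/-- A vertex is simplicial if its neighborhood is a clique. -/
def IsSimplicial {V : Type} (G : SimpleGraph V) (v : V) : Prop :=
  G.IsClique (G.neighborSet v)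

/-- A graph is perfect if every induced subgraph has chromatic number equal to
its clique number. -/
def IsPerfect {V : Type} (G : SimpleGraph V) : Prop :=
  ∀ S : Set V, (G.induce S).chromaticNumber = ((G.induce S).cliqueNum : ℕ∞)

/-- The function `f_k`: `⌊kn/(k-1)⌋` if `n ≡ 0, 1 (mod k-1)`, and `⌈kn/(k-1)⌉`
otherwise. -/
def ringF (k n : ℕ) : ℕ :=
  if n % (k - 1) ≤ 1 then k * n / (k - 1) else (k * n + (k - 2)) / (k - 1)

/-- The function `g_k`: `⌊kn/(k-1)⌋` if `n mod (k-1) ∈ {0, …, (k-3)/2}`, and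
`⌈kn/(k-1)⌉` if `n mod (k-1) ∈ {(k-1)/2, …, k-2}`. -/
def ringG (k n : ℕ) : ℕ :=
  if n % (k - 1) ≤ (k - 3) / 2 then k * n / (k - 1) else (k * n + (k - 2)) / (k - 1)

/-- The function `f_T`: `⌊5n/4⌋` if `n ≡ 0, 1 (mod 4)`, and `⌈5n/4⌉` if
`n ≡ 2, 3 (mod 4)`. -/
def fT (n : ℕ) : ℕ :=
  if n % 4 ≤ 1 then 5 * n / 4 else (5 * n + 3) / 4

/-- `G` contains the complete graph `K_m` as a minor, witnessed by `m` pairwise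
disjoint nonempty branch sets, each inducing a connected subgraph, with an edge
between every two of them. -/
def HasCompleteMinor {V : Type} (G : SimpleGraph V) (m : ℕ) : Prop :=
  ∃ S : Fin m → Set V,
    (∀ i, (S i).Nonempty) ∧
    (∀ i j, i ≠ j → Disjoint (S i) (S j)) ∧
    (∀ i, (G.induce (S i)).Connected) ∧
    (∀ i j, i ≠ j → ∃ x ∈ S i, ∃ y ∈ S j, G.Adj x y)

section LemA
variable {W : Type} [Fintype W] (G : SimpleGraph W) (r : W → W → Prop)

noncomputable def chainHeight {W : Type} [Fintype W] (r : W → W → Prop) (hwf : WellFounded r) : W → ℕ :=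
  hwf.fix (fun v ih =>
    (Finset.univ.filter (fun u => r u v)).attach.sup
      (fun u => ih u.1 ((Finset.mem_filter.mp u.2).2) + 1))

lemma chainHeight_eq (hwf : WellFounded r) (v : W) :
    chainHeight r hwf v =
      (Finset.univ.filter (fun u => r u v)).attach.sup
        (fun u => chainHeight r hwf u.1 + 1) := by
  classical
  rw [chainHeight, WellFounded.fix_eq]

lemma chainHeight_lt (hwf : WellFounded r) {u v : W} (h : r u v) :
    chainHeight r hwf u < chainHeight r hwf v := by
  classical
  rw [chainHeight_eq r hwf v]
  have hu : u ∈ Finset.univ.filter (fun u => r u v) := by simp [h]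
  have := Finset.le_sup (f := fun u : {x // x ∈ Finset.univ.filter (fun u => r u v)} =>
    chainHeight r hwf u.1 + 1) (Finset.mem_attach _ ⟨u, hu⟩)
  exact Nat.lt_of_lt_of_le (Nat.lt_succ_self _) this

lemma chainHeight_clique (hwf : WellFounded r)
    (hirr : ∀ x, ¬ r x x) (htr : ∀ {a b c}, r a b → r b c → r a c)
    (hadj : ∀ x y, G.Adj x y ↔ r x y ∨ r y x) (v : W) :
    ∃ s : Finset W, G.IsNClique (chainHeight r hwf v + 1) s ∧
      ∀ x ∈ s, x = v ∨ r x v := by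
  classical
  induction v using hwf.induction with
  | _ v ih =>
    rcases Finset.eq_empty_or_nonempty ((Finset.univ.filter (fun u => r u v))) with he | hne
    · refine ⟨{v}, ?_, by simp⟩
      have h0 : chainHeight r hwf v = 0 := by
        rw [chainHeight_eq]
        simp [he]
      rw [h0]
      simp [isNClique_singleton]
    · obtain ⟨u, hu, hsup⟩ := Finset.exists_mem_eq_sup (Finset.univ.filter (fun x => r x v)).attach
        (hne.attach) (fun u => chainHeight r hwf u.1 + 1)
      obtain ⟨w, hruv, hsup2⟩ : ∃ w, r w v ∧
          ((Finset.univ.filter (fun x => r x v)).attach.sup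
            (fun u => chainHeight r hwf u.1 + 1)) = chainHeight r hwf w + 1 :=
        ⟨u.1, (Finset.mem_filter.mp u.2).2, hsup⟩
      obtain ⟨s, hs, htop⟩ := ih w hruv
      have hvs : v ∉ s := by
        intro hv
        rcases htop v hv with rfl | h
        · exact hirr _ hruv
        · exact hirr v (htr h hruv)
      refine ⟨insert v s, ?_, ?_⟩
      · constructor
        · intro x hx y hy hxy
          simp only [Finset.coe_insert, Set.mem_insert_iff, Finset.mem_coe] at hx hy
          have key : ∀ x ∈ s, G.Adj x v := by
            intro x hxs
            rcases htop x hxs with rfl | h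
            · exact (hadj x v).mpr (Or.inl hruv)
            · exact (hadj x v).mpr (Or.inl (htr h hruv))
          rcases hx with rfl | hx
          · rcases hy with rfl | hy
            · exact absurd rfl hxy
            · exact ((key y hy).symm)
          · rcases hy with rfl | hy
            · exact key x hx
            · exact hs.isClique hx hy hxy
        · rw [Finset.card_insert_of_notMem hvs, hs.card_eq]
          have : chainHeight r hwf v = chainHeight r hwf w + 1 := by
            rw [chainHeight_eq]; rw [hsup2]
          omega
      · intro x hx
        rcases Finset.mem_insert.mp hx with rfl | hx
        · exact Or.inl rfl
        · rcases htop x hx with rfl | h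
          · exact Or.inr hruv
          · exact Or.inr (htr h hruv)

lemma comparability_chrom_eq (r : W → W → Prop)
    (hirr : ∀ x, ¬ r x x) (htr : ∀ {a b c}, r a b → r b c → r a c)
    (hadj : ∀ x y, G.Adj x y ↔ r x y ∨ r y x) :
    G.chromaticNumber = (G.cliqueNum : ℕ∞) := by
  classical
  have : IsTrans W r := ⟨fun _ _ _ => htr⟩
  have : IsIrrefl W r := ⟨hirr⟩
  have hwf : WellFounded r := Finite.wellFounded_of_trans_of_irrefl r
  have hlt : ∀ v, chainHeight r hwf v < G.cliqueNum := by
    intro v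
    obtain ⟨s, hs, -⟩ := chainHeight_clique G r hwf hirr htr hadj v
    have := hs.isClique.card_le_cliqueNum
    rw [hs.card_eq] at this
    omega
  have hcol : G.Colorable G.cliqueNum := by
    refine ⟨Coloring.mk (fun v => ⟨chainHeight r hwf v, hlt v⟩) ?_⟩
    intro x y hxy he
    have heq : chainHeight r hwf x = chainHeight r hwf y := congrArg Fin.val he
    rcases (hadj x y).mp hxy with h | h
    · exact absurd heq (chainHeight_lt r hwf h).ne
    · exact absurd heq.symm (chainHeight_lt r hwf h).ne
  refine le_antisymm (hcol.chromaticNumber_le) ?_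
  obtain ⟨s, hs⟩ := G.exists_isNClique_cliqueNum
  have := hs.isClique.card_le_chromaticNumber
  rwa [hs.card_eq] at this
end LemA

/-- Every even ring is perfect: if `k ≥ 4` is even and `R` is a `k`-ring, then
every induced subgraph of `R` has chromatic number equal to its clique number. -/
theorem even_ring_perfect {V : Type} [Fintype V]
    (k : ℕ) (hk : 4 ≤ k) (hke : Even k)
    (R : SimpleGraph V) (hR : IsRing R k) :
    IsPerfect R := by
  classical
  haveI : NeZero k := ⟨by omega⟩
  haveI : Fact (1 < k) := ⟨by omega⟩
  obtain ⟨X, hXne, hpart, hstruct⟩ := hR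
  choose m hm u hinj hrange hnest hcov hfirst using hstruct
  -- bag index
  have hιex : ∀ v : V, ∃ i, v ∈ X i := fun v => (hpart v).exists
  choose ι hι using hιex
  have huniq : ∀ (v : V) (i : ZMod k), v ∈ X i → ι v = i := by
    intro v i hvi
    obtain ⟨j, hj, hun⟩ := hpart v
    rw [hun _ (hι v), hun _ hvi]
  -- rank inside bag
  have hrkex : ∀ v : V, ∃ j : Fin (m (ι v)), u (ι v) j = v := by
    intro v
    have : v ∈ Set.range (u (ι v)) := (hrange (ι v)).symm ▸ hι v
    exact this
  choose rk hrk using hrkex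
  -- parity helpers
  have hEvenMod : ∀ a : ℕ, Even (a % k) ↔ Even a := by
    intro a
    conv_rhs => rw [← Nat.mod_add_div a k]
    simp [Nat.even_add, (hke.mul_right (a / k))]
  have hflip : ∀ i : ZMod k, Even ((i + 1 : ZMod k)).val ↔ ¬ Even i.val := by
    intro i
    rw [ZMod.val_add, ZMod.val_one, hEvenMod, Nat.even_add_one]
  have hflip' : ∀ i : ZMod k, Even ((i - 1 : ZMod k)).val ↔ ¬ Even i.val := by
    intro i
    have := hflip (i - 1)
    rw [sub_add_cancel] at this
    tauto
  -- membership of closed neighborhoods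
  have hmemN : ∀ {x y : V}, R.Adj x y → y ∈ closedNbhd R x := by
    intro x y h
    exact Set.mem_insert_of_mem _ h
  have hadjOfMem : ∀ {x y : V}, y ∈ closedNbhd R x → y ≠ x → R.Adj x y := by
    intro x y hy hne
    rcases hy with h | h
    · exact absurd h hne
    · exact h
  -- bags of adjacent vertices
  have hbag : ∀ {x y : V}, R.Adj x y → ι y = ι x - 1 ∨ ι y = ι x ∨ ι y = ι x + 1 := by
    intro x y hxy
    have h0 : closedNbhd R x ⊆ closedNbhd R (u (ι x) ⟨0, hm (ι x)⟩) := by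
      have := hnest (ι x) ⟨0, hm (ι x)⟩ (rk x) (by simp [Fin.le_def])
      rw [hrk x] at this
      exact this
    have hy : y ∈ X (ι x - 1) ∪ X (ι x) ∪ X (ι x + 1) := by
      rw [← hfirst (ι x)]
      exact h0 (hmemN hxy)
    rcases hy with (h | h) | h
    · exact Or.inl (huniq y _ h)
    · exact Or.inr (Or.inl (huniq y _ h))
    · exact Or.inr (Or.inr (huniq y _ h))
  -- nesting within a bag (by rank)
  have hnb : ∀ {x y : V}, ι x = ι y → (rk x).val ≤ (rk y).val →
      closedNbhd R y ⊆ closedNbhd R x := by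
    intro x y hxy hle
    obtain ⟨j, hj, hjval⟩ : ∃ j : Fin (m (ι x)), u (ι x) j = y ∧ j.val = (rk y).val := by
      rw [hxy]; exact ⟨rk y, hrk y, rfl⟩
    have := hnest (ι x) (rk x) j (by rw [Fin.le_def, hjval]; exact hle)
    rw [hrk x, hj] at this
    exact this
  -- distinct vertices in the same bag have distinct ranks
  have hrkinj : ∀ {x y : V}, ι x = ι y → (rk x).val = (rk y).val → x = y := by
    intro x y hxy hval
    obtain ⟨j, hj, hjval⟩ : ∃ j : Fin (m (ι x)), u (ι x) j = y ∧ j.val = (rk y).val := by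
      rw [hxy]; exact ⟨rk y, hrk y, rfl⟩
    have : rk x = j := Fin.ext (by rw [hjval, hval])
    rw [← hrk x, this, hj]
  -- parity differs for adjacent vertices in distinct bags
  have hpar : ∀ {x y : V}, R.Adj x y → ι x ≠ ι y →
      (Even (ι y).val ↔ ¬ Even (ι x).val) := by
    intro x y hxy hne
    rcases hbag hxy with h | h | h
    · rw [h]; exact hflip' (ι x)
    · exact absurd h.symm hne
    · rw [h]; exact hflip (ι x)
  -- the strict order
  set r : V → V → Prop := fun x y => R.Adj x y ∧
    ((Even (ι x).val ∧ ¬ Even (ι y).val) ∨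
      (ι x = ι y ∧ ((Even (ι x).val ∧ (rk x).val < (rk y).val) ∨
        (¬ Even (ι x).val ∧ (rk y).val < (rk x).val)))) with hr
  have hirr : ∀ x, ¬ r x x := fun x hx => R.irrefl hx.1
  have hadjr : ∀ x y, R.Adj x y ↔ r x y ∨ r y x := by
    intro x y
    constructor
    · intro hxy
      by_cases hb : ι x = ι y
      · have hrkne : (rk x).val ≠ (rk y).val := fun h => hxy.ne (hrkinj hb h)
        by_cases he : Even (ι x).val
        · rcases Nat.lt_or_ge (rk x).val (rk y).val with h | h
          · exact Or.inl ⟨hxy, Or.inr ⟨hb, Or.inl ⟨he, h⟩⟩⟩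
          · exact Or.inr ⟨hxy.symm, Or.inr ⟨hb.symm, Or.inl ⟨hb ▸ he, by omega⟩⟩⟩
        · rcases Nat.lt_or_ge (rk x).val (rk y).val with h | h
          · exact Or.inr ⟨hxy.symm, Or.inr ⟨hb.symm, Or.inr ⟨hb ▸ he, h⟩⟩⟩
          · exact Or.inl ⟨hxy, Or.inr ⟨hb, Or.inr ⟨he, by omega⟩⟩⟩
      · have hp := hpar hxy hb
        by_cases he : Even (ι x).val
        · exact Or.inl ⟨hxy, Or.inl ⟨he, by tauto⟩⟩
        · exact Or.inr ⟨hxy.symm, Or.inl ⟨by tauto, he⟩⟩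
    · rintro (h | h)
      · exact h.1
      · exact h.1.symm
  have htr : ∀ {a b c : V}, r a b → r b c → r a c := by
    rintro x y z ⟨haxy, hcxy⟩ ⟨hayz, hcyz⟩
    rcases hcxy with ⟨hex, hney⟩ | ⟨hbxy, hrxy⟩
    · rcases hcyz with ⟨hey, _⟩ | ⟨hbyz, hryz⟩
      · exact absurd hey hney
      · -- x cross into bag of y; y,z same (odd) bag
        rcases hryz with ⟨hey, _⟩ | ⟨_, hlt⟩
        · exact absurd hey hney
        · have hsub : closedNbhd R y ⊆ closedNbhd R z := hnb hbyz.symm (le_of_lt hlt)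
          have hxz : x ∈ closedNbhd R z := hsub (hmemN haxy.symm)
          have hnez : ¬ Even (ι z).val := hbyz ▸ hney
          have hxnez : x ≠ z := fun h => hnez (h ▸ hex)
          exact ⟨(hadjOfMem hxz hxnez).symm, Or.inl ⟨hex, hnez⟩⟩
    · rcases hcyz with ⟨hey, hnez⟩ | ⟨hbyz, hryz⟩
      · -- x,y same (even) bag; y cross to z
        have hex : Even (ι x).val := hbxy ▸ hey
        rcases hrxy with ⟨_, hlt⟩ | ⟨hnex, _⟩
        · have hsub : closedNbhd R y ⊆ closedNbhd R x := hnb hbxy (le_of_lt hlt)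
          have hzx : z ∈ closedNbhd R x := hsub (hmemN hayz)
          have hznex : z ≠ x := fun h => hnez (h ▸ hex)
          exact ⟨hadjOfMem hzx hznex, Or.inl ⟨hex, hnez⟩⟩
        · exact absurd hex hnex
      · -- all in the same bag
        have hbxz : ι x = ι z := hbxy.trans hbyz
        rcases hrxy with ⟨hex, hlt1⟩ | ⟨hnex, hlt1⟩
        · have hlt2 : (rk y).val < (rk z).val := by
            rcases hryz with ⟨_, h⟩ | ⟨hney, _⟩
            · exact h
            · exact absurd (hbxy ▸ hex) hney
          have hsub : closedNbhd R z ⊆ closedNbhd R x := hnb hbxz (by omega)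
          have hzx : z ∈ closedNbhd R x := hsub (Set.mem_insert _ _)
          have hznex : z ≠ x := fun h => by
            rw [h] at hlt2; omega
          exact ⟨hadjOfMem hzx hznex, Or.inr ⟨hbxz, Or.inl ⟨hex, by omega⟩⟩⟩
        · have hlt2 : (rk z).val < (rk y).val := by
            rcases hryz with ⟨hey, _⟩ | ⟨_, h⟩
            · exact absurd hey (hbxy ▸ hnex)
            · exact h
          have hsub : closedNbhd R x ⊆ closedNbhd R z := hnb hbxz.symm (by omega)
          have hxz : x ∈ closedNbhd R z := hsub (Set.mem_insert _ _)
          have hxnez : x ≠ z := fun h => by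
            rw [h] at hlt1; omega
          exact ⟨(hadjOfMem hxz hxnez).symm, Or.inr ⟨hbxz, Or.inr ⟨hnex, by omega⟩⟩⟩
  -- conclude
  intro S
  haveI : Fintype ↥S := Set.Finite.fintype S.toFinite
  refine comparability_chrom_eq (R.induce S) (fun a b => r a.1 b.1)
    (fun a => hirr a.1) (fun hab hbc => htr hab hbc) ?_
  intro a b
  have : (R.induce S).Adj a b ↔ R.Adj a.1 b.1 := Iff.rfl
  rw [this, hadjr]
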